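/- Let P be an affine space of dimension n ≥ 3 over the two-element field GF(2). For all lines a₁, a₂ of P with a₁ ≠ a₂ the following are equivalent: (i) a₁ ∩ a₂ = ∅; (ii) there exist lines b₁, b₂ with b₁ ≠ b₂ such that for each i ∈ {1,2}: bᵢ ∼ a₁, bᵢ ∼ a₂ and bᵢ ∩ a₁ ≠ bᵢ ∩ a₂ (i.e. bᵢ meets a₁ and a₂ in two distinct points). -/

import Mathlib

/-- `a` is an affine line: a nonempty affine subspace whose direction has finrank 1. -/
def ALine (K : Type*) {V P : Type*} [DivisionRing K] [AddCommGroup V] [Module K V]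
    [AddTorsor V P] (a : AffineSubspace K P) : Prop :=
  (a : Set P).Nonempty ∧ Module.finrank K a.direction = 1

/-- `a` is an affine plane: a nonempty affine subspace whose direction has finrank 2. -/
def APlane (K : Type*) {V P : Type*} [DivisionRing K] [AddCommGroup V] [Module K V]
    [AddTorsor V P] (a : AffineSubspace K P) : Prop :=
  (a : Set P).Nonempty ∧ Module.finrank K a.direction = 2

/-- Two lines intersect: they are different and have a common point. -/
def AMeets {K V P : Type*} [DivisionRing K] [AddCommGroup V] [Module K V]
    [AddTorsor V P] (a b : AffineSubspace K P) : Prop :=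
  a ≠ b ∧ ((a : Set P) ∩ (b : Set P)).Nonempty

/-- `x` meets the lines `y` and `z` in two distinct points. -/
def AMeetsTwo {K V P : Type*} [DivisionRing K] [AddCommGroup V] [Module K V]
    [AddTorsor V P] (x y z : AffineSubspace K P) : Prop :=
  AMeets x y ∧ AMeets x z ∧ x ⊓ y ≠ x ⊓ z

section Aux

variable {V P : Type*} [AddCommGroup V] [Module (ZMod 2) V] [AddTorsor V P]

lemma zmod2_cases (c : ZMod 2) : c = 0 ∨ c = 1 := by fin_cases c <;> [exact Or.inl rfl; exact Or.inr rfl]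

/-- A GF(2)-line containing `p` has exactly one other point. -/
lemma aline_two_points {a : AffineSubspace (ZMod 2) P} (ha : ALine (ZMod 2) a)
    {p : P} (hp : p ∈ a) : ∃ q, q ≠ p ∧ (a : Set P) = {p, q} := by
  obtain ⟨v, hv0, hv⟩ := finrank_eq_one_iff'.mp ha.2
  refine ⟨(v : V) +ᵥ p, ?_, ?_⟩
  · intro h
    apply hv0
    have : (v : V) = 0 := by
      have := vadd_vsub (v : V) p
      rw [h, vsub_self] at this
      exact this.symm
    exact Subtype.ext this
  · apply Set.Subset.antisymm
    · intro x hx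
      have hxd : x -ᵥ p ∈ a.direction := AffineSubspace.vsub_mem_direction hx hp
      obtain ⟨c, hc⟩ := hv ⟨x -ᵥ p, hxd⟩
      have hc' : c • (v : V) = x -ᵥ p := congrArg Subtype.val hc
      rcases zmod2_cases c with h | h <;> subst h
      · simp only [zero_smul] at hc'
        left
        exact vsub_eq_zero_iff_eq.mp hc'.symm
      · simp only [one_smul] at hc'
        right
        simp only [Set.mem_singleton_iff]
        rw [hc', vsub_vadd]
    · rintro x (rfl | rfl)
      · exact hp
      · exact AffineSubspace.vadd_mem_of_mem_direction v.2 hp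

lemma aline_coe_eq {a : AffineSubspace (ZMod 2) P} (ha : ALine (ZMod 2) a)
    {p q : P} (hp : p ∈ a) (hq : q ∈ a) (hne : p ≠ q) : (a : Set P) = {p, q} := by
  obtain ⟨q', hq', hset⟩ := aline_two_points ha hp
  have hmem : q ∈ ({p, q'} : Set P) := hset ▸ hq
  rcases hmem with h | h
  · exact absurd h.symm hne
  · rw [hset, h]

lemma aline_span_pair {p q : P} (h : p ≠ q) :
    ALine (ZMod 2) (affineSpan (ZMod 2) {p, q}) := by
  constructor
  · exact ⟨p, subset_affineSpan _ _ (Set.mem_insert _ _)⟩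
  · rw [direction_affineSpan, vectorSpan_pair]
    exact finrank_span_singleton (vsub_ne_zero.mpr h)

end Aux

theorem statement14 {V P : Type*} [AddCommGroup V] [Module (ZMod 2) V] [AddTorsor V P]
    {n : ℕ} (hn : 3 ≤ n) (hdim : Module.finrank (ZMod 2) V = n)
    (a₁ a₂ : AffineSubspace (ZMod 2) P)
    (ha₁ : ALine (ZMod 2) a₁) (ha₂ : ALine (ZMod 2) a₂) (hne : a₁ ≠ a₂) :
    ((a₁ : Set P) ∩ (a₂ : Set P) = ∅) ↔
    (∃ b₁ b₂ : AffineSubspace (ZMod 2) P, ALine (ZMod 2) b₁ ∧ ALine (ZMod 2) b₂ ∧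
      b₁ ≠ b₂ ∧ AMeetsTwo b₁ a₁ a₂ ∧ AMeetsTwo b₂ a₁ a₂) := by
  constructor
  · intro hdisj
    have hdisj' : ∀ x : P, x ∈ a₁ → x ∉ a₂ := by
      intro x hx1 hx2
      have : x ∈ ((a₁ : Set P) ∩ (a₂ : Set P)) := ⟨hx1, hx2⟩
      rw [hdisj] at this
      exact this
    obtain ⟨p, hp⟩ := ha₁.1
    obtain ⟨q, hqp, hset1⟩ := aline_two_points ha₁ hp
    obtain ⟨r, hr⟩ := ha₂.1
    obtain ⟨s, hsr, hset2⟩ := aline_two_points ha₂ hr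
    have hq : q ∈ a₁ := by rw [← SetLike.mem_coe, hset1]; right; rfl
    have hs : s ∈ a₂ := by rw [← SetLike.mem_coe, hset2]; right; rfl
    have hpr : p ≠ r := fun h => hdisj' p hp (h ▸ hr)
    have hqs : q ≠ s := fun h => hdisj' q hq (h ▸ hs)
    refine ⟨affineSpan (ZMod 2) {p, r}, affineSpan (ZMod 2) {q, s},
      aline_span_pair hpr, aline_span_pair hqs, ?_, ?_, ?_⟩
    · -- b₁ ≠ b₂
      intro h
      have hpb : p ∈ affineSpan (ZMod 2) {q, s} :=
        h ▸ subset_affineSpan (ZMod 2) _ (Set.mem_insert _ _)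
      have hcoe := aline_coe_eq (aline_span_pair hqs)
        (subset_affineSpan (ZMod 2) _ (Set.mem_insert _ _))
        (subset_affineSpan (ZMod 2) _ (Set.mem_insert_of_mem _ rfl)) hqs
      have : p ∈ ({q, s} : Set P) := hcoe ▸ hpb
      rcases this with h' | h'
      · exact hqp h'.symm
      · exact hdisj' p hp (h' ▸ hs)
    · -- AMeetsTwo b₁ a₁ a₂
      have hpb : p ∈ affineSpan (ZMod 2) {p, r} := subset_affineSpan (ZMod 2) _ (Set.mem_insert _ _)
      have hrb : r ∈ affineSpan (ZMod 2) {p, r} :=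
        subset_affineSpan (ZMod 2) _ (Set.mem_insert_of_mem _ rfl)
      refine ⟨⟨?_, ⟨p, hpb, hp⟩⟩, ⟨?_, ⟨r, hrb, hr⟩⟩, ?_⟩
      · intro h
        exact hdisj' r (h ▸ hrb) hr
      · intro h
        exact hdisj' p hp (h ▸ hpb)
      · intro h
        have hmem : p ∈ affineSpan (ZMod 2) {p, r} ⊓ a₁ := ⟨hpb, hp⟩
        rw [h] at hmem
        exact hdisj' p hp hmem.2
    · -- AMeetsTwo b₂ a₁ a₂
      have hqb : q ∈ affineSpan (ZMod 2) {q, s} := subset_affineSpan (ZMod 2) _ (Set.mem_insert _ _)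
      have hsb : s ∈ affineSpan (ZMod 2) {q, s} :=
        subset_affineSpan (ZMod 2) _ (Set.mem_insert_of_mem _ rfl)
      refine ⟨⟨?_, ⟨q, hqb, hq⟩⟩, ⟨?_, ⟨s, hsb, hs⟩⟩, ?_⟩
      · intro h
        exact hdisj' s (h ▸ hsb) hs
      · intro h
        exact hdisj' q hq (h ▸ hqb)
      · intro h
        have hmem : q ∈ affineSpan (ZMod 2) {q, s} ⊓ a₁ := ⟨hqb, hq⟩
        rw [h] at hmem
        exact hdisj' q hq hmem.2
  · rintro ⟨b₁, b₂, hb₁, hb₂, hbne, ht₁, ht₂⟩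
    by_contra hinter
    obtain ⟨x, hx1, hx2⟩ := Set.nonempty_iff_ne_empty.mpr hinter
    obtain ⟨p, hpx, hset1⟩ := aline_two_points ha₁ hx1
    obtain ⟨r, hrx, hset2⟩ := aline_two_points ha₂ hx2
    have hp : p ∈ a₁ := by rw [← SetLike.mem_coe, hset1]; right; rfl
    have hr : r ∈ a₂ := by rw [← SetLike.mem_coe, hset2]; right; rfl
    have hpr : p ≠ r := by
      intro h
      apply hne
      apply SetLike.coe_injective
      rw [hset1, hset2, h]
    have key : ∀ b : AffineSubspace (ZMod 2) P, ALine (ZMod 2) b →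
        AMeetsTwo b a₁ a₂ → (b : Set P) = {p, r} := by
      rintro b hb ⟨⟨hba₁, u, hu1, hu2⟩, ⟨hba₂, w, hw1, hw2⟩, hinf⟩
      have hxb : x ∉ b := by
        intro hxb
        obtain ⟨y, hyx, hbset⟩ := aline_two_points hb hxb
        have hy : y ∈ b := by rw [← SetLike.mem_coe, hbset]; right; rfl
        have hya₁ : y ∉ a₁ := by
          intro hy1
          apply hba₁
          apply SetLike.coe_injective
          have : y ∈ ({x, p} : Set P) := hset1 ▸ hy1
          rcases this with h | h
          · exact absurd h hyx
          · rw [hbset, hset1, h]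
        have hya₂ : y ∉ a₂ := by
          intro hy2
          apply hba₂
          apply SetLike.coe_injective
          have : y ∈ ({x, r} : Set P) := hset2 ▸ hy2
          rcases this with h | h
          · exact absurd h hyx
          · rw [hbset, hset2, h]
        apply hinf
        have e1 : (b : Set P) ∩ (a₁ : Set P) = {x} := by
          apply Set.Subset.antisymm
          · rintro z ⟨hz1, hz2⟩
            have : z ∈ ({x, y} : Set P) := hbset ▸ hz1
            rcases this with h | h
            · exact h
            · exact absurd (h ▸ hz2) hya₁
          · rintro z rfl
            exact ⟨hxb, hx1⟩
        have e2 : (b : Set P) ∩ (a₂ : Set P) = {x} := by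
          apply Set.Subset.antisymm
          · rintro z ⟨hz1, hz2⟩
            have : z ∈ ({x, y} : Set P) := hbset ▸ hz1
            rcases this with h | h
            · exact h
            · exact absurd (h ▸ hz2) hya₂
          · rintro z rfl
            exact ⟨hxb, hx2⟩
        ext z
        rw [AffineSubspace.mem_inf_iff, AffineSubspace.mem_inf_iff]
        constructor
        · rintro ⟨hz1, hz2⟩
          have hzx : z ∈ ({x} : Set P) := e1 ▸ (⟨hz1, hz2⟩ : z ∈ ((b : Set P) ∩ (a₁ : Set P)))
          rcases hzx with rfl
          exact ⟨hxb, hx2⟩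
        · rintro ⟨hz1, hz2⟩
          have hzx : z ∈ ({x} : Set P) := e2 ▸ (⟨hz1, hz2⟩ : z ∈ ((b : Set P) ∩ (a₂ : Set P)))
          rcases hzx with rfl
          exact ⟨hxb, hx1⟩
      have hub : p ∈ b := by
        have : u ∈ ({x, p} : Set P) := hset1 ▸ hu2
        rcases this with h | h
        · exact absurd (h ▸ hu1) hxb
        · exact h ▸ hu1
      have hwb : r ∈ b := by
        have : w ∈ ({x, r} : Set P) := hset2 ▸ hw2
        rcases this with h | h
        · exact absurd (h ▸ hw1) hxb
        · exact h ▸ hw1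
      exact aline_coe_eq hb hub hwb hpr
    apply hbne
    apply SetLike.coe_injective
    rw [key b₁ hb₁ ht₁, key b₂ hb₂ ht₂]
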